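/- arXiv:1402.0810 — 4 statements merged into one kernel-verified Lean document; each statement's English description precedes it below -/
import Mathlib

section
/- Let A = {P^A_i}_{i=1}^{r_A} and B = {P^B_j}_{j=1}^{r_B} be projective observables on ℂ^d. Then tr(P^B_j (Σ_i P^A_i ρ P^A_i)) = tr(P^B_j ρ) holds for every density matrix ρ and every outcome j if and only if P^A_i P^B_j = P^B_j P^A_i for all i and j. -/
open scoped BigOperators ComplexOrder
open Matrix

noncomputable section

/-- A projective observable: a finite family of mutually orthogonal
self-adjoint idempotents summing to the identity. -/
def IsProjObs {d r : ℕ} (P : Fin r → Matrix (Fin d) (Fin d) ℂ) : Prop :=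
  (∀ i, (P i).IsHermitian) ∧ (∀ i, P i * P i = P i) ∧
    (∀ i k, i ≠ k → P i * P k = 0) ∧ (∑ i, P i = 1)

/-- A density matrix: positive semidefinite with unit trace. -/
def IsDensity {d : ℕ} (ρ : Matrix (Fin d) (Fin d) ℂ) : Prop :=
  ρ.PosSemidef ∧ ρ.trace = 1

/-- The measurement channel `E^A(ρ) = Σ_i P_i ρ P_i` of a projective observable. -/
def measChannel {d r : ℕ} (P : Fin r → Matrix (Fin d) (Fin d) ℂ)
    (ρ : Matrix (Fin d) (Fin d) ℂ) : Matrix (Fin d) (Fin d) ℂ :=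
  ∑ i, P i * ρ * P i

/-- `p^B_ρ(j) = tr(P^B_j ρ)`. -/
def probB {d rB : ℕ} (Q : Fin rB → Matrix (Fin d) (Fin d) ℂ)
    (ρ : Matrix (Fin d) (Fin d) ℂ) (j : Fin rB) : ℝ :=
  ((Q j * ρ).trace).re

/-- `q^{A→B}_ρ(j) = tr(P^B_j Σ_i P^A_i ρ P^A_i)`. -/
def probAB {d rA rB : ℕ} (P : Fin rA → Matrix (Fin d) (Fin d) ℂ)
    (Q : Fin rB → Matrix (Fin d) (Fin d) ℂ)
    (ρ : Matrix (Fin d) (Fin d) ℂ) (j : Fin rB) : ℝ :=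
  ((Q j * measChannel P ρ).trace).re

open Classical in
/-- The positive semidefinite square root of a PSD matrix (junk value `0` otherwise). -/
noncomputable def msqrt {d : ℕ} (A : Matrix (Fin d) (Fin d) ℂ) :
    Matrix (Fin d) (Fin d) ℂ :=
  if h : A.PosSemidef then
    (h.1.eigenvectorUnitary : Matrix (Fin d) (Fin d) ℂ) *
      diagonal ((↑) ∘ Real.sqrt ∘ h.1.eigenvalues) *
      (star h.1.eigenvectorUnitary : Matrix (Fin d) (Fin d) ℂ)
  else 0

/-- `|X| = √(Xᴴ X)`, the positive semidefinite absolute value of a matrix. -/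
noncomputable def matAbs {d : ℕ} (X : Matrix (Fin d) (Fin d) ℂ) :
    Matrix (Fin d) (Fin d) ℂ :=
  msqrt (Xᴴ * X)

/-- The quantum fidelity `F(ρ,σ) = tr √(√ρ σ √ρ)`. -/
noncomputable def qFid {d : ℕ} (ρ σ : Matrix (Fin d) (Fin d) ℂ) : ℝ :=
  ((msqrt (msqrt ρ * σ * msqrt ρ)).trace).re

/-- Variational distance `D_1(p,q) = (1/2) Σ_j |p_j − q_j|`. -/
def distL1 {rB : ℕ} (p q : Fin rB → ℝ) : ℝ := (1 / 2) * ∑ j, |p j - q j|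

/-- Chebyshev distance `D_∞(p,q) = max_j |p_j − q_j|`. -/
noncomputable def distLinf {rB : ℕ} (p q : Fin rB → ℝ) : ℝ := ⨆ j, |p j - q j|

/-- Classical fidelity `F(p,q) = Σ_j √(p_j q_j)`. -/
noncomputable def classFid {rB : ℕ} (p q : Fin rB → ℝ) : ℝ :=
  ∑ j, Real.sqrt (p j * q j)

/-- `Q_1(A→B)`. -/
noncomputable def Q1 {d rA rB : ℕ} (P : Fin rA → Matrix (Fin d) (Fin d) ℂ)
    (Q : Fin rB → Matrix (Fin d) (Fin d) ℂ) : ℝ :=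
  sSup {x : ℝ | ∃ ρ, IsDensity ρ ∧ x = distL1 (probAB P Q ρ) (probB Q ρ)}

/-- `Q_∞(A→B)`. -/
noncomputable def Qinf {d rA rB : ℕ} (P : Fin rA → Matrix (Fin d) (Fin d) ℂ)
    (Q : Fin rB → Matrix (Fin d) (Fin d) ℂ) : ℝ :=
  sSup {x : ℝ | ∃ ρ, IsDensity ρ ∧ x = distLinf (probAB P Q ρ) (probB Q ρ)}

/-- `Q_F(A→B)`. -/
noncomputable def QF {d rA rB : ℕ} (P : Fin rA → Matrix (Fin d) (Fin d) ℂ)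
    (Q : Fin rB → Matrix (Fin d) (Fin d) ℂ) : ℝ :=
  sSup {x : ℝ | ∃ ρ, IsDensity ρ ∧
    x = 1 - (classFid (probAB P Q ρ) (probB Q ρ)) ^ 2}

/-- The rank-one projection `|v⟩⟨v|` onto a (unit) vector `v`. -/
def proj {d : ℕ} (v : Fin d → ℂ) : Matrix (Fin d) (Fin d) ℂ :=
  Matrix.vecMulVec v (star v)

private lemma tr_vvh {d : ℕ} (M : Matrix (Fin d) (Fin d) ℂ) (v : Fin d → ℂ) :
    (M * Matrix.vecMulVec v (star v)).trace = star v ⬝ᵥ M.mulVec v := by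
  simp [Matrix.trace, Matrix.diag, Matrix.mul_apply, Matrix.vecMulVec_apply, dotProduct,
    Matrix.mulVec, Finset.mul_sum]
  apply Finset.sum_congr rfl; intros; apply Finset.sum_congr rfl; intros; ring

private lemma psd_vvh {d : ℕ} (v : Fin d → ℂ) : (Matrix.vecMulVec v (star v)).PosSemidef := by
  have := Matrix.posSemidef_self_mul_conjTranspose (Matrix.replicateCol (Fin 1) v)
  convert this using 1
  ext i j
  simp [Matrix.vecMulVec_apply, Matrix.mul_apply, Matrix.conjTranspose_apply]

private lemma tr_vvh' {d : ℕ} (v : Fin d → ℂ) :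
    (Matrix.vecMulVec v (star v)).trace = star v ⬝ᵥ v := by
  simp [Matrix.trace, Matrix.diag, Matrix.vecMulVec_apply, dotProduct, mul_comm]

private lemma psd_smul {d : ℕ} {A : Matrix (Fin d) (Fin d) ℂ} (hA : A.PosSemidef)
    {c : ℂ} (hc : 0 ≤ c) : (c • A).PosSemidef := by
  refine Matrix.PosSemidef.of_dotProduct_mulVec_nonneg ?_ (fun x => ?_)
  · have hsc : star c = c := by
      rw [Complex.star_def, Complex.conj_eq_iff_im]
      exact ((Complex.nonneg_iff.mp hc).2).symm
    show (c • A)ᴴ = c • A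
    rw [Matrix.conjTranspose_smul, hA.1, hsc]
  · rw [Matrix.smul_mulVec, dotProduct_smul, smul_eq_mul]
    exact mul_nonneg hc (hA.dotProduct_mulVec_nonneg x)

private lemma quad_zero {d : ℕ} (M : Matrix (Fin d) (Fin d) ℂ)
    (h : ∀ v : Fin d → ℂ, star v ⬝ᵥ M.mulVec v = 0) : M = 0 := by
  have h2 : ∀ x : EuclideanSpace ℂ (Fin d), @inner ℂ _ _ (Matrix.toEuclideanLin M x) x = 0 := by
    intro x
    rw [EuclideanSpace.inner_eq_star_dotProduct, Matrix.ofLp_toEuclideanLin_apply]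
    set v : Fin d → ℂ := WithLp.ofLp x
    have := congrArg star (h v)
    simpa [dotProduct, Finset.mul_sum, mul_comm] using this
  have h3 := (inner_map_self_eq_zero (Matrix.toEuclideanLin M : _ →ₗ[ℂ] _)).mp h2
  have h0 : Matrix.toEuclideanLin (0 : Matrix (Fin d) (Fin d) ℂ) = 0 := by simp
  exact Matrix.toEuclideanLin.injective (h3.trans h0.symm)

theorem stmt_0 {d rA rB : ℕ} (hd : 0 < d)
    (P : Fin rA → Matrix (Fin d) (Fin d) ℂ) (Q : Fin rB → Matrix (Fin d) (Fin d) ℂ)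
    (hP : IsProjObs P) (hQ : IsProjObs Q) :
    (∀ ρ : Matrix (Fin d) (Fin d) ℂ, IsDensity ρ →
        ∀ j, (Q j * measChannel P ρ).trace = (Q j * ρ).trace) ↔
      (∀ i j, P i * Q j = Q j * P i) := by
  obtain ⟨hPh, hPid, hPorth, hPsum⟩ := hP
  -- key trace rewriting
  have key : ∀ (ρ : Matrix (Fin d) (Fin d) ℂ) j,
      (Q j * measChannel P ρ).trace = ((∑ i, P i * Q j * P i) * ρ).trace := by
    intro ρ j
    rw [measChannel, Finset.mul_sum, Matrix.trace_sum, Finset.sum_mul, Matrix.trace_sum]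
    refine Finset.sum_congr rfl fun i _ => ?_
    calc (Q j * (P i * ρ * P i)).trace
        = (Q j * (P i * ρ) * P i).trace := by simp only [Matrix.mul_assoc]
      _ = (P i * (Q j * (P i * ρ))).trace := (Matrix.trace_mul_comm _ _)
      _ = (P i * Q j * P i * ρ).trace := by simp only [Matrix.mul_assoc]
  constructor
  · intro h i j
    -- first show `∑ i, P i * Q j * P i = Q j`
    have hM : (∑ i, P i * Q j * P i) = Q j := by
      have hz : ((∑ i, P i * Q j * P i) - Q j) = 0 := by
        apply quad_zero
        intro v
        by_cases hv : v = 0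
        · simp [hv]
        · set c : ℂ := star v ⬝ᵥ v with hc
          have hc0 : 0 ≤ c := dotProduct_star_self_nonneg v
          have hcne : c ≠ 0 := fun hcz => hv (dotProduct_star_self_eq_zero.mp hcz)
          have hρ : IsDensity (c⁻¹ • Matrix.vecMulVec v (star v)) := by
            have hcinv : (0:ℂ) ≤ c⁻¹ := by
              have h1 : c = ((c.re : ℝ) : ℂ) := by
                rw [Complex.ext_iff]
                exact ⟨rfl, ((Complex.nonneg_iff.mp hc0).2).symm⟩
              rw [h1, ← Complex.ofReal_inv]
              rw [Complex.nonneg_iff]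
              constructor
              · simpa using inv_nonneg.mpr (Complex.nonneg_iff.mp hc0).1
              · simp
            refine ⟨psd_smul (psd_vvh v) hcinv, ?_⟩
            rw [Matrix.trace_smul, tr_vvh', ← hc, smul_eq_mul, inv_mul_cancel₀ hcne]
          have htr := h _ hρ j
          rw [key] at htr
          have htr' : (((∑ i, P i * Q j * P i) - Q j) * (c⁻¹ • Matrix.vecMulVec v (star v))).trace = 0 := by
            rw [Matrix.sub_mul, Matrix.trace_sub, htr, sub_self]
          rw [Matrix.mul_smul, Matrix.trace_smul, smul_eq_mul, mul_eq_zero] at htr'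
          rcases htr' with h1 | h1
          · exact absurd h1 (inv_ne_zero hcne)
          · rw [tr_vvh] at h1; exact h1
      linear_combination (norm := module) hz
    -- derive commutation
    have hleft : P i * Q j = P i * Q j * P i := by
      conv_lhs => rw [← hM]
      rw [Finset.mul_sum]
      rw [Finset.sum_eq_single i]
      · rw [← Matrix.mul_assoc, ← Matrix.mul_assoc, hPid i]
      · intro k _ hk
        rw [← Matrix.mul_assoc, ← Matrix.mul_assoc, hPorth i k (Ne.symm hk), Matrix.zero_mul,
          Matrix.zero_mul]
      · intro hi; exact absurd (Finset.mem_univ i) hi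
    have hright : Q j * P i = P i * Q j * P i := by
      conv_lhs => rw [← hM]
      rw [Finset.sum_mul]
      rw [Finset.sum_eq_single i]
      · rw [Matrix.mul_assoc, Matrix.mul_assoc, hPid i, ← Matrix.mul_assoc]
      · intro k _ hk
        rw [Matrix.mul_assoc, Matrix.mul_assoc, hPorth k i hk, Matrix.mul_zero, Matrix.mul_zero]
      · intro hi; exact absurd (Finset.mem_univ i) hi
    rw [hleft, hright]
  · intro h ρ _ j
    rw [key]
    have : (∑ i, P i * Q j * P i) = Q j := by
      calc (∑ i, P i * Q j * P i) = ∑ i, Q j * P i := by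
            refine Finset.sum_congr rfl fun i _ => ?_
            rw [h i j, Matrix.mul_assoc, hPid i]
        _ = Q j * ∑ i, P i := by rw [Finset.mul_sum]
        _ = Q j := by rw [hPsum, mul_one]
    rw [this]


end
end

section
/- Let A = {P^A_i} and B = {P^B_j} be projective observables on ℂ^d. Then Q_1(A→B) = 0 if and only if P^A_i P^B_j = P^B_j P^A_i for all i and j. -/
open scoped BigOperators ComplexOrder
open Matrix

noncomputable section

section Helpers

variable {d : ℕ}

private lemma psd_trace_re_nonneg' {C : Matrix (Fin d) (Fin d) ℂ} (hC : C.PosSemidef) :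
    0 ≤ (C.trace).re := by
  rw [Matrix.trace, Complex.re_sum]
  refine Finset.sum_nonneg fun i _ => ?_
  have h := hC.re_dotProduct_nonneg (Pi.single i 1)
  simpa [Matrix.mulVec_single, dotProduct, Pi.single_apply, Matrix.diag] using h

open scoped MatrixOrder in
private lemma psd_trace_re_nonneg {A B : Matrix (Fin d) (Fin d) ℂ}
    (hA : A.PosSemidef) (hB : B.PosSemidef) : 0 ≤ ((A * B).trace).re := by
  have hA0 : (0 : Matrix (Fin d) (Fin d) ℂ) ≤ A := hA.nonneg
  have hS : (CFC.sqrt A).PosSemidef := (CFC.sqrt_nonneg A).posSemidef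
  have h1 : (A * B).trace = (CFC.sqrt A * B * CFC.sqrt A).trace := by
    conv_lhs => rw [← CFC.sqrt_mul_sqrt_self A hA0]
    rw [Matrix.mul_assoc, Matrix.trace_mul_comm]
  rw [h1]
  have h2 := hB.mul_mul_conjTranspose_same (CFC.sqrt A)
  rw [hS.isHermitian.eq] at h2
  exact psd_trace_re_nonneg' h2

private lemma projObs_psd {r : ℕ} {P : Fin r → Matrix (Fin d) (Fin d) ℂ}
    (hP : IsProjObs P) (i : Fin r) : (P i).PosSemidef := by
  have h : P i = (P i)ᴴ * (P i) := by rw [(hP.1 i).eq]; exact (hP.2.1 i).symm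
  rw [h]; exact Matrix.posSemidef_conjTranspose_mul_self _

private lemma measChannel_psd {r : ℕ} {P : Fin r → Matrix (Fin d) (Fin d) ℂ}
    (hP : IsProjObs P) {ρ : Matrix (Fin d) (Fin d) ℂ} (hρ : ρ.PosSemidef) :
    (measChannel P ρ).PosSemidef := by
  unfold measChannel
  refine Finset.sum_induction _ _ (fun a b ha hb => ha.add hb) Matrix.PosSemidef.zero
    (fun i _ => ?_)
  have h : P i * ρ * P i = P i * ρ * (P i)ᴴ := by rw [(hP.1 i).eq]
  rw [h]; exact hρ.mul_mul_conjTranspose_same _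

private lemma measChannel_trace {r : ℕ} {P : Fin r → Matrix (Fin d) (Fin d) ℂ}
    (hP : IsProjObs P) (ρ : Matrix (Fin d) (Fin d) ℂ) :
    (measChannel P ρ).trace = ρ.trace := by
  unfold measChannel
  rw [Matrix.trace_sum]
  have h : ∀ i ∈ Finset.univ, (P i * ρ * P i).trace = (P i * ρ).trace := fun i _ => by
    rw [Matrix.trace_mul_cycle, hP.2.1 i]
  rw [Finset.sum_congr rfl h, ← Matrix.trace_sum, ← Finset.sum_mul, hP.2.2.2, one_mul]

private lemma key_trace {rA : ℕ} (P : Fin rA → Matrix (Fin d) (Fin d) ℂ)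
    (Qj ρ : Matrix (Fin d) (Fin d) ℂ) :
    (Qj * measChannel P ρ).trace = ((∑ i, P i * Qj * P i) * ρ).trace := by
  unfold measChannel
  rw [Finset.mul_sum, Matrix.trace_sum, Finset.sum_mul, Matrix.trace_sum]
  refine Finset.sum_congr rfl fun i _ => ?_
  simp only [← Matrix.mul_assoc]
  rw [Matrix.trace_mul_comm]
  simp only [← Matrix.mul_assoc]

private lemma isDensity_vecMulVec {v : Fin d → ℂ}
    (hv : dotProduct (star v) v = 1) :
    IsDensity (Matrix.vecMulVec v (star v)) := by
  have hmv : ∀ x : Fin d → ℂ, (Matrix.vecMulVec v (star v)) *ᵥ x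
      = (dotProduct (star v) x) • v := by
    intro x; funext a
    simp only [Matrix.mulVec, Matrix.vecMulVec_apply, dotProduct, Pi.smul_apply,
      Pi.star_apply, smul_eq_mul, Finset.sum_mul, Finset.mul_sum]
    exact Finset.sum_congr rfl fun b _ => by ring
  constructor
  · refine Matrix.PosSemidef.of_dotProduct_mulVec_nonneg ?_ ?_
    · ext a b
      simp [Matrix.conjTranspose_apply, Matrix.vecMulVec_apply, mul_comm]
    · intro x
      rw [hmv x]
      have hsd : dotProduct (star x) ((dotProduct (star v) x) • v)
          = (dotProduct (star v) x) * dotProduct (star x) v := by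
        rw [dotProduct_smul, smul_eq_mul]
      rw [hsd]
      have hc : dotProduct (star x) v
          = (starRingEnd ℂ) (dotProduct (star v) x) := by
        simp [dotProduct, map_sum, mul_comm]
      rw [hc, Complex.mul_conj]
      exact_mod_cast Complex.normSq_nonneg _
  · have : (Matrix.vecMulVec v (star v)).trace = dotProduct (star v) v := by
      simp [Matrix.trace, Matrix.diag, Matrix.vecMulVec_apply, dotProduct, mul_comm]
    rw [this, hv]

private lemma trace_mul_vecMulVec (M : Matrix (Fin d) (Fin d) ℂ) (v : Fin d → ℂ) :
    (M * Matrix.vecMulVec v (star v)).trace = dotProduct (star v) (M *ᵥ v) := by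
  simp only [Matrix.trace, Matrix.diag, Matrix.mul_apply, Matrix.vecMulVec_apply,
    dotProduct, Matrix.mulVec, Pi.star_apply]
  refine Finset.sum_congr rfl fun a _ => ?_
  rw [Finset.mul_sum]
  refine Finset.sum_congr rfl fun b _ => by ring

private lemma herm_quadform_zero {M : Matrix (Fin d) (Fin d) ℂ}
    (h : ∀ v : Fin d → ℂ, dotProduct (star v) (M *ᵥ v) = 0) : M = 0 := by
  have hT : Matrix.toEuclideanLin M = 0 := by
    rw [← inner_map_self_eq_zero]
    intro x
    rw [Matrix.toEuclideanLin_apply]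
    rw [EuclideanSpace.inner_eq_star_dotProduct]
    have hx : dotProduct ((WithLp.equiv 2 _) x) (star (M *ᵥ (WithLp.equiv 2 _) x))
        = (starRingEnd ℂ) (dotProduct (star ((WithLp.equiv 2 _) x))
            (M *ᵥ (WithLp.equiv 2 _) x)) := by
      simp [dotProduct, map_sum, mul_comm]
    exact hx.trans (by rw [h, map_zero])
  exact (LinearEquiv.map_eq_zero_iff _).mp hT

end Helpers

theorem stmt_1 {d rA rB : ℕ} (hd : 0 < d)
    (P : Fin rA → Matrix (Fin d) (Fin d) ℂ) (Q : Fin rB → Matrix (Fin d) (Fin d) ℂ)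
    (hP : IsProjObs P) (hQ : IsProjObs Q) :
    Q1 P Q = 0 ↔ (∀ i j, P i * Q j = Q j * P i) := by
  have hQpsd : ∀ j, (Q j).PosSemidef := projObs_psd hQ
  have hkey : ∀ (ρ : Matrix (Fin d) (Fin d) ℂ) j,
      probAB P Q ρ j = (((∑ i, P i * Q j * P i) * ρ).trace).re := fun ρ j => by
    unfold probAB; rw [key_trace]
  have hρ0 : IsDensity (Matrix.vecMulVec (Pi.single (⟨0, hd⟩ : Fin d) (1:ℂ))
      (star (Pi.single (⟨0, hd⟩ : Fin d) (1:ℂ)))) := by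
    apply isDensity_vecMulVec
    simp [dotProduct, Pi.single_apply]
  constructor
  · intro h0 i j
    unfold Q1 at h0
    set S := {x : ℝ | ∃ ρ, IsDensity ρ ∧ x = distL1 (probAB P Q ρ) (probB Q ρ)} with hS
    have hsumB : ∀ ρ, IsDensity ρ → ∑ j', probB Q ρ j' = 1 := by
      intro ρ hρ
      have h1 : ∑ j', (Q j' * ρ).trace = ρ.trace := by
        rw [← Matrix.trace_sum, ← Finset.sum_mul, hQ.2.2.2, one_mul]
      unfold probB
      rw [← Complex.re_sum, h1, hρ.2, Complex.one_re]
    have hsumAB : ∀ ρ, IsDensity ρ → ∑ j', probAB P Q ρ j' = 1 := by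
      intro ρ hρ
      have h1 : ∑ j', (Q j' * measChannel P ρ).trace = ρ.trace := by
        rw [← Matrix.trace_sum, ← Finset.sum_mul, hQ.2.2.2, one_mul, measChannel_trace hP]
      unfold probAB
      rw [← Complex.re_sum, h1, hρ.2, Complex.one_re]
    have hBnn : ∀ ρ, IsDensity ρ → ∀ j', 0 ≤ probB Q ρ j' := fun ρ hρ j' =>
      psd_trace_re_nonneg (hQpsd j') hρ.1
    have hABnn : ∀ ρ, IsDensity ρ → ∀ j', 0 ≤ probAB P Q ρ j' := fun ρ hρ j' =>
      psd_trace_re_nonneg (hQpsd j') (measChannel_psd hP hρ.1)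
    have hbdd : BddAbove S := by
      refine ⟨1, fun x hx => ?_⟩
      obtain ⟨ρ, hρ, rfl⟩ := hx
      unfold distL1
      have hle : ∑ j', |probAB P Q ρ j' - probB Q ρ j'| ≤ 2 := by
        calc ∑ j', |probAB P Q ρ j' - probB Q ρ j'|
            ≤ ∑ j', (probAB P Q ρ j' + probB Q ρ j') :=
              Finset.sum_le_sum fun j' _ => (abs_sub _ _).trans (by
                rw [abs_of_nonneg (hABnn ρ hρ j'), abs_of_nonneg (hBnn ρ hρ j')])
          _ = 2 := by rw [Finset.sum_add_distrib, hsumAB ρ hρ, hsumB ρ hρ]; norm_num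
      linarith
    have hzero : ∀ ρ, IsDensity ρ → ∀ j', probAB P Q ρ j' = probB Q ρ j' := by
      intro ρ hρ j'
      have hmem : distL1 (probAB P Q ρ) (probB Q ρ) ∈ S := ⟨ρ, hρ, rfl⟩
      have hle := le_csSup hbdd hmem
      rw [h0] at hle
      have hge : 0 ≤ distL1 (probAB P Q ρ) (probB Q ρ) := by
        unfold distL1; positivity
      have hL : distL1 (probAB P Q ρ) (probB Q ρ) = 0 := le_antisymm hle hge
      unfold distL1 at hL
      have hsum0 : ∑ j'', |probAB P Q ρ j'' - probB Q ρ j''| = 0 := by linarith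
      have h2 := (Finset.sum_eq_zero_iff_of_nonneg
        (fun j'' _ => abs_nonneg _)).mp hsum0 j' (Finset.mem_univ _)
      have h3 := abs_eq_zero.mp h2
      linarith
    set M := (∑ i', P i' * Q j * P i') - Q j with hM
    have hMherm : M.IsHermitian := by
      show Mᴴ = M
      rw [hM, Matrix.conjTranspose_sub, Matrix.conjTranspose_sum, (hQ.1 j).eq]
      congr 1
      refine Finset.sum_congr rfl fun i' _ => ?_
      simp [Matrix.conjTranspose_mul, (hP.1 i').eq, (hQ.1 j).eq, Matrix.mul_assoc]
    have hMtr : ∀ ρ, IsDensity ρ → (M * ρ).trace = 0 := by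
      intro ρ hρ
      have hre : ((M * ρ).trace).re = 0 := by
        have h1 : (M * ρ).trace = ((∑ i', P i' * Q j * P i') * ρ).trace - (Q j * ρ).trace := by
          rw [hM, Matrix.sub_mul, Matrix.trace_sub]
        rw [h1, Complex.sub_re]
        have h4 := hzero ρ hρ j
        rw [hkey ρ j] at h4
        unfold probB at h4
        linarith
      have him : ((M * ρ).trace).im = 0 := by
        have hst : (starRingEnd ℂ) ((M * ρ).trace) = (M * ρ).trace := by
          calc (starRingEnd ℂ) ((M * ρ).trace)
              = ((M * ρ)ᴴ).trace := (Matrix.trace_conjTranspose _).symm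
            _ = (ρᴴ * Mᴴ).trace := by rw [Matrix.conjTranspose_mul]
            _ = (ρ * M).trace := by rw [hMherm.eq, hρ.1.1.eq]
            _ = (M * ρ).trace := Matrix.trace_mul_comm _ _
        exact Complex.conj_eq_iff_im.mp hst
      exact Complex.ext hre him
    have hquad : ∀ v : Fin d → ℂ, dotProduct (star v) (M *ᵥ v) = 0 := by
      intro v
      by_cases hv : v = 0
      · simp [hv]
      · set r : ℝ := ∑ b, Complex.normSq (v b) with hr
        have hrpos : 0 < r := by
          obtain ⟨b, hb⟩ := Function.ne_iff.mp hv
          exact Finset.sum_pos' (fun b' _ => Complex.normSq_nonneg _)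
            ⟨b, Finset.mem_univ b, Complex.normSq_pos.mpr hb⟩
        have hsr : Real.sqrt r ≠ 0 := ne_of_gt (Real.sqrt_pos.mpr hrpos)
        set a : ℂ := (((Real.sqrt r)⁻¹ : ℝ) : ℂ) with ha
        have ha0 : a ≠ 0 := by
          rw [ha]; exact_mod_cast inv_ne_zero hsr
        have hvv : dotProduct (star v) v = (r : ℂ) := by
          simp only [dotProduct, Pi.star_apply, Complex.star_def, hr,
            Complex.ofReal_sum]
          exact Finset.sum_congr rfl fun b _ => by rw [mul_comm, Complex.mul_conj]
        have hww : dotProduct (star (a • v)) (a • v) = 1 := by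
          rw [star_smul, smul_dotProduct, dotProduct_smul, hvv,
            smul_eq_mul, smul_eq_mul, ha, Complex.star_def, Complex.conj_ofReal,
            ← Complex.ofReal_mul, ← Complex.ofReal_mul, Complex.ofReal_eq_one]
          have hss : Real.sqrt r * Real.sqrt r = r := Real.mul_self_sqrt hrpos.le
          field_simp
          rw [Real.sq_sqrt hrpos.le]
        have hd0 := hMtr _ (isDensity_vecMulVec hww)
        rw [trace_mul_vecMulVec] at hd0
        rw [star_smul, smul_dotProduct] at hd0
        have hmv : M *ᵥ (a • v) = a • (M *ᵥ v) := by
          funext b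
          simp only [Matrix.mulVec, dotProduct, Pi.smul_apply, smul_eq_mul,
            Finset.mul_sum]
          exact Finset.sum_congr rfl fun k _ => by ring
        rw [hmv, dotProduct_smul, smul_eq_mul, smul_eq_mul] at hd0
        rcases mul_eq_zero.mp hd0 with h | h
        · exact absurd (star_eq_zero.mp h) ha0
        rcases mul_eq_zero.mp h with h' | h'
        · exact absurd h' ha0
        · exact h'
    have hM0 : M = 0 := herm_quadform_zero hquad
    have hsum : (∑ i', P i' * Q j * P i') = Q j := sub_eq_zero.mp hM0
    have h1 : P i * Q j * P i = P i * Q j := by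
      have hc := congrArg (fun X => P i * X) hsum
      simp only [Finset.mul_sum] at hc
      rw [Finset.sum_eq_single i (fun k _ hk => by
          rw [show P i * (P k * Q j * P k) = (P i * P k) * (Q j * P k) by
            simp [Matrix.mul_assoc], hP.2.2.1 i k (Ne.symm hk), Matrix.zero_mul])
        (fun h => absurd (Finset.mem_univ i) h)] at hc
      rw [show P i * (P i * Q j * P i) = (P i * P i) * (Q j * P i) by
        simp [Matrix.mul_assoc], hP.2.1 i, ← Matrix.mul_assoc] at hc
      exact hc
    have h2 : P i * Q j * P i = Q j * P i := by
      have hc := congrArg (fun X => X * P i) hsum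
      simp only [Finset.sum_mul] at hc
      rw [Finset.sum_eq_single i (fun k _ hk => by
          rw [show P k * Q j * P k * P i = (P k * Q j) * (P k * P i) by
            simp [Matrix.mul_assoc], hP.2.2.1 k i hk, Matrix.mul_zero])
        (fun h => absurd (Finset.mem_univ i) h)] at hc
      rw [show P i * Q j * P i * P i = (P i * Q j) * (P i * P i) by
        simp [Matrix.mul_assoc], hP.2.1 i] at hc
      exact hc
    rw [← h1, h2]
  · intro hcomm
    have hmeas : ∀ j', (∑ i, P i * Q j' * P i) = Q j' := by
      intro j'
      calc ∑ i, P i * Q j' * P i = ∑ i, Q j' * P i := by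
            refine Finset.sum_congr rfl fun i _ => ?_
            rw [hcomm i j', Matrix.mul_assoc, hP.2.1 i]
        _ = Q j' := by rw [← Finset.mul_sum, hP.2.2.2, mul_one]
    have hall : ∀ ρ, IsDensity ρ → distL1 (probAB P Q ρ) (probB Q ρ) = 0 := by
      intro ρ hρ
      unfold distL1
      have heq : ∀ j', probAB P Q ρ j' = probB Q ρ j' := by
        intro j'
        rw [hkey ρ j', hmeas j']
        rfl
      simp [heq]
    have hSet : {x : ℝ | ∃ ρ, IsDensity ρ ∧ x = distL1 (probAB P Q ρ) (probB Q ρ)}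
        = {0} := by
      ext x
      simp only [Set.mem_setOf_eq, Set.mem_singleton_iff]
      constructor
      · rintro ⟨ρ, hρ, rfl⟩; exact hall ρ hρ
      · rintro rfl
        exact ⟨_, hρ0, (hall _ hρ0).symm⟩
    unfold Q1
    rw [hSet, csSup_singleton]

end
end

section
/- Let {a_i}_{i=1}^d and {b_j}_{j=1}^d be mutually unbiased orthonormal bases of ℂ^d, and let A = {|a_i⟩⟨a_i|} and B = {|b_j⟩⟨b_j|} be the corresponding non-degenerate projective observables. Then Q_∞(A→B) = 1 − 1/d, the supremum being attained at ρ = |b_1⟩⟨b_1|. -/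
open scoped BigOperators ComplexOrder
open Matrix

noncomputable section

lemma vecMulVec_mulVec' {d : ℕ} (u v x : Fin d → ℂ) :
    (Matrix.vecMulVec u v) *ᵥ x = (v ⬝ᵥ x) • u := by
  ext k
  simp only [Matrix.mulVec, Matrix.vecMulVec_apply, dotProduct, Pi.smul_apply,
    smul_eq_mul, Finset.sum_mul]
  exact Finset.sum_congr rfl fun j _ => by ring

lemma trace_vecMulVec_mul {d : ℕ} (u v : Fin d → ℂ) (M : Matrix (Fin d) (Fin d) ℂ) :
    (Matrix.vecMulVec u v * M).trace = v ⬝ᵥ (M *ᵥ u) := by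
  simp only [Matrix.trace, Matrix.diag, Matrix.mul_apply, Matrix.vecMulVec_apply,
    dotProduct, Matrix.mulVec, Finset.mul_sum]
  rw [Finset.sum_comm]
  exact Finset.sum_congr rfl fun m _ => Finset.sum_congr rfl fun k _ => by ring

lemma trace_proj_mul {d : ℕ} (v : Fin d → ℂ) (M : Matrix (Fin d) (Fin d) ℂ) :
    (proj v * M).trace = star v ⬝ᵥ (M *ᵥ v) :=
  trace_vecMulVec_mul v (star v) M

lemma sum_proj_one {d : ℕ} (a : Fin d → (Fin d → ℂ))
    (ha : ∀ i j, star (a i) ⬝ᵥ a j = if i = j then 1 else 0) :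
    ∑ i, proj (a i) = 1 := by
  set V : Matrix (Fin d) (Fin d) ℂ := (Matrix.of a)ᵀ with hV
  have h1 : Vᴴ * V = 1 := by
    ext i j
    have := ha i j
    simp only [dotProduct, Pi.star_apply] at this
    simp only [RCLike.star_def] at this
    simp [Matrix.mul_apply, hV, Matrix.conjTranspose_apply, Matrix.one_apply, this]
  have h2 : V * Vᴴ = 1 := mul_eq_one_comm.mp h1
  have h3 : ∀ k l, (∑ i, proj (a i)) k l = (V * Vᴴ) k l := by
    intro k l
    simp [proj, Matrix.vecMulVec_apply, Matrix.sum_apply, Matrix.mul_apply, hV,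
      Matrix.conjTranspose_apply]
  ext k l
  rw [h3, h2]


lemma trace_proj {d : ℕ} (v : Fin d → ℂ) : (proj v).trace = star v ⬝ᵥ v := by
  simp [proj, Matrix.trace, Matrix.diag, Matrix.vecMulVec_apply, dotProduct, mul_comm]

lemma proj_posSemidef {d : ℕ} (v : Fin d → ℂ) : (proj v).PosSemidef := by
  rw [posSemidef_iff_dotProduct_mulVec]
  constructor
  · ext k l
    simp [proj, Matrix.conjTranspose_apply, Matrix.vecMulVec_apply, mul_comm]
  · intro x
    rw [proj, vecMulVec_mulVec', dotProduct_smul, smul_eq_mul,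
      Matrix.star_dotProduct]
    rw [show ∀ z : ℂ, star z * z = (Complex.normSq z : ℂ) from fun z => by
      rw [mul_comm]; exact Complex.mul_conj z]
    exact Complex.zero_le_real.mpr (Complex.normSq_nonneg _)

lemma probB_eq {d : ℕ} (b : Fin d → (Fin d → ℂ)) (ρ : Matrix (Fin d) (Fin d) ℂ) (j : Fin d) :
    probB (fun j => proj (b j)) ρ j = (star (b j) ⬝ᵥ (ρ *ᵥ b j)).re := by
  rw [probB, trace_proj_mul]

lemma sum_dot {d : ℕ} (a : Fin d → (Fin d → ℂ))
    (ha : ∀ i j, star (a i) ⬝ᵥ a j = if i = j then 1 else 0)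
    (ρ : Matrix (Fin d) (Fin d) ℂ) :
    ∑ i, star (a i) ⬝ᵥ (ρ *ᵥ a i) = ρ.trace := by
  calc ∑ i, star (a i) ⬝ᵥ (ρ *ᵥ a i) = ∑ i, (proj (a i) * ρ).trace := by
        simp [trace_proj_mul]
    _ = ((∑ i, proj (a i)) * ρ).trace := by rw [Finset.sum_mul, Matrix.trace_sum]
    _ = ρ.trace := by rw [sum_proj_one a ha, one_mul]

lemma probAB_eq {d : ℕ} (a b : Fin d → (Fin d → ℂ))
    (ha : ∀ i j, star (a i) ⬝ᵥ a j = if i = j then 1 else 0)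
    (hmub : ∀ i j, Complex.normSq (star (a i) ⬝ᵥ b j) = 1 / (d : ℝ))
    (ρ : Matrix (Fin d) (Fin d) ℂ) (hρ : ρ.trace = 1) (j : Fin d) :
    probAB (fun i => proj (a i)) (fun j => proj (b j)) ρ j = 1 / (d : ℝ) := by
  have key : ∀ i, (proj (b j) * (proj (a i) * ρ * proj (a i))).trace
      = ((1 / (d : ℝ) : ℝ) : ℂ) * (star (a i) ⬝ᵥ (ρ *ᵥ a i)) := by
    intro i
    rw [trace_proj_mul, ← Matrix.mulVec_mulVec, ← Matrix.mulVec_mulVec]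
    rw [show proj (a i) *ᵥ b j = (star (a i) ⬝ᵥ b j) • a i from vecMulVec_mulVec' _ _ _]
    rw [Matrix.mulVec_smul, Matrix.mulVec_smul]
    rw [show proj (a i) *ᵥ (ρ *ᵥ a i) = (star (a i) ⬝ᵥ (ρ *ᵥ a i)) • a i from
      vecMulVec_mulVec' _ _ _]
    rw [dotProduct_smul, dotProduct_smul, smul_eq_mul, smul_eq_mul,
      Matrix.star_dotProduct (b j) (a i), ← hmub i j]
    rw [show ∀ z w : ℂ, z * (w * star z) = (z * star z) * w from fun z w => by ring]
    rw [show ∀ z : ℂ, z * star z = (Complex.normSq z : ℂ) from fun z => Complex.mul_conj z]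
  rw [probAB, measChannel, Finset.mul_sum, Matrix.trace_sum]
  simp only [key]
  rw [← Finset.mul_sum, sum_dot a ha ρ, hρ, mul_one, Complex.ofReal_re]

lemma probB_nonneg {d : ℕ} (b : Fin d → (Fin d → ℂ)) (ρ : Matrix (Fin d) (Fin d) ℂ)
    (hρ : ρ.PosSemidef) (j : Fin d) : 0 ≤ probB (fun j => proj (b j)) ρ j := by
  rw [probB_eq]
  have := hρ.dotProduct_mulVec_nonneg (b j)
  rw [Complex.le_def] at this
  simpa using this.1

lemma probB_sum {d : ℕ} (b : Fin d → (Fin d → ℂ))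
    (hb : ∀ i j, star (b i) ⬝ᵥ b j = if i = j then 1 else 0)
    (ρ : Matrix (Fin d) (Fin d) ℂ) (hρ : ρ.trace = 1) :
    ∑ j, probB (fun j => proj (b j)) ρ j = 1 := by
  have h : ∑ j, probB (fun j => proj (b j)) ρ j = (∑ j, star (b j) ⬝ᵥ (ρ *ᵥ b j)).re := by
    rw [Complex.re_sum]
    exact Finset.sum_congr rfl fun j _ => probB_eq b ρ j
  rw [h, sum_dot b hb ρ, hρ, Complex.one_re]


theorem stmt_13 {d : ℕ} (hd : 0 < d)
    (a b : Fin d → (Fin d → ℂ))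
    (ha : ∀ i j, star (a i) ⬝ᵥ a j = if i = j then 1 else 0)
    (hb : ∀ i j, star (b i) ⬝ᵥ b j = if i = j then 1 else 0)
    (hmub : ∀ i j, Complex.normSq (star (a i) ⬝ᵥ b j) = 1 / (d : ℝ)) :
    Qinf (fun i => proj (a i)) (fun j => proj (b j)) = 1 - 1 / (d : ℝ) ∧
      distLinf (probAB (fun i => proj (a i)) (fun j => proj (b j)) (proj (b ⟨0, hd⟩)))
          (probB (fun j => proj (b j)) (proj (b ⟨0, hd⟩)))
        = 1 - 1 / (d : ℝ) := by
  set j0 : Fin d := ⟨0, hd⟩ with hj0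
  have hd1 : (1 : ℝ) ≤ (d : ℝ) := by exact_mod_cast hd
  have hdpos : (0 : ℝ) < (d : ℝ) := by exact_mod_cast hd
  have hinv_nonneg : (0:ℝ) ≤ 1 / (d:ℝ) := by positivity
  have hinv_le_one : 1 / (d:ℝ) ≤ 1 := by rw [div_le_one hdpos]; exact hd1
  have bound : ∀ (p : Fin d → ℝ), (∀ j, 0 ≤ p j) → (∑ j, p j = 1) →
      ∀ j, |1 / (d:ℝ) - p j| ≤ 1 - 1 / (d:ℝ) := by
    intro p hp hsum j
    have hple : p j ≤ 1 := by
      rw [← hsum]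
      exact Finset.single_le_sum (fun k _ => hp k) (Finset.mem_univ j)
    rcases Nat.lt_or_ge d 2 with h2 | h2
    · have hd1' : d = 1 := by omega
      subst hd1'
      have hj : j = j0 := Subsingleton.elim j j0
      have hp1 : p j = 1 := by rw [← hsum, hj, Fin.sum_univ_one]; rfl
      rw [hp1]
      norm_num
    · have h2' : (2:ℝ) ≤ (d:ℝ) := by exact_mod_cast h2
      have h12 : 1/(d:ℝ) ≤ 1/2 := by
        apply one_div_le_one_div_of_le <;> linarith
      rw [abs_le]
      constructor <;> linarith [hp j]
  have hρ0 : IsDensity (proj (b j0)) := by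
    refine ⟨proj_posSemidef _, ?_⟩
    rw [trace_proj, hb j0 j0]
    simp
  have hq0 : ∀ j, probB (fun j => proj (b j)) (proj (b j0)) j
      = if j = j0 then 1 else 0 := by
    intro j
    rw [probB_eq]
    rw [show (proj (b j0)) *ᵥ b j = (star (b j0) ⬝ᵥ b j) • b j0 from vecMulVec_mulVec' _ _ _]
    rw [dotProduct_smul, smul_eq_mul, hb j0 j, hb j j0]
    by_cases h : j = j0
    · subst h; simp
    · simp [h, Ne.symm h]
  have hAB : ∀ (ρ : Matrix (Fin d) (Fin d) ℂ), IsDensity ρ → ∀ j,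
      probAB (fun i => proj (a i)) (fun j => proj (b j)) ρ j = 1/(d:ℝ) :=
    fun ρ hρ => probAB_eq a b ha hmub ρ hρ.2
  have hne : Nonempty (Fin d) := ⟨j0⟩
  have hub : ∀ ρ, IsDensity ρ →
      distLinf (probAB (fun i => proj (a i)) (fun j => proj (b j)) ρ)
        (probB (fun j => proj (b j)) ρ) ≤ 1 - 1/(d:ℝ) := by
    intro ρ hρ
    apply ciSup_le
    intro j
    rw [hAB ρ hρ]
    exact bound _ (probB_nonneg b ρ hρ.1) (probB_sum b hb ρ hρ.2) j
  have hval : distLinf (probAB (fun i => proj (a i)) (fun j => proj (b j)) (proj (b j0)))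
      (probB (fun j => proj (b j)) (proj (b j0))) = 1 - 1/(d:ℝ) := by
    apply le_antisymm (hub _ hρ0)
    have h0 : |probAB (fun i => proj (a i)) (fun j => proj (b j)) (proj (b j0)) j0
        - probB (fun j => proj (b j)) (proj (b j0)) j0| = 1 - 1/(d:ℝ) := by
      rw [hAB _ hρ0, hq0, if_pos rfl, abs_of_nonpos (by linarith)]
      ring
    unfold distLinf
    calc 1 - 1/(d:ℝ) = |probAB (fun i => proj (a i)) (fun j => proj (b j)) (proj (b j0)) j0
          - probB (fun j => proj (b j)) (proj (b j0)) j0| := h0.symm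
      _ ≤ _ := le_ciSup (f := fun j =>
          |probAB (fun i => proj (a i)) (fun j => proj (b j)) (proj (b j0)) j
          - probB (fun j => proj (b j)) (proj (b j0)) j|)
          (Set.Finite.bddAbove (Set.finite_range _)) j0
  exact ⟨IsGreatest.csSup_eq ⟨⟨proj (b j0), hρ0, hval.symm⟩,
    by rintro x ⟨ρ, hρ, rfl⟩; exact hub ρ hρ⟩, hval⟩


end
end

section
/- Let 0 ≤ d_c ≤ d−1, and let {a_i}_{i=1}^d and {b_j}_{j=1}^d be orthonormal bases of ℂ^d such that a_i = b_i for all i ≤ d_c, ⟨a_i, b_j⟩ = 0 whenever exactly one of i, j is ≤ d_c, and |⟨a_i, b_j⟩|² = 1/(d−d_c) whenever both i, j > d_c. Let A = {|a_i⟩⟨a_i|} and B = {|b_j⟩⟨b_j|} be the corresponding non-degenerate projective observables. Then Q_F(A→B) = Q_F(B→A) = 1 − 1/(d−d_c), and hence the mutual incompatibility Q_F(A,B) := (Q_F(A→B) + Q_F(B→A))/4 equals (1/2)(1 − 1/(d−d_c)). -/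
open scoped BigOperators ComplexOrder
open Matrix

noncomputable section

namespace Stmt14Aux

variable {d : ℕ}

lemma proj_mulVec (v w : Fin d → ℂ) : proj v *ᵥ w = (star v ⬝ᵥ w) • v := by
  funext k
  simp [proj, mulVec, vecMulVec, dotProduct, Finset.sum_mul, Finset.mul_sum]
  apply Finset.sum_congr rfl; intros; ring

lemma trace_proj_mul (w : Fin d → ℂ) (M : Matrix (Fin d) (Fin d) ℂ) :
    (proj w * M).trace = star w ⬝ᵥ M *ᵥ w := by
  simp only [trace, diag, mul_apply, proj, vecMulVec_apply, mulVec, dotProduct, Pi.star_apply,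
    Finset.mul_sum]
  rw [Finset.sum_comm]
  apply Finset.sum_congr rfl; intros; apply Finset.sum_congr rfl; intros; ring

lemma star_dot_conj (v w : Fin d → ℂ) : star v ⬝ᵥ w = starRingEnd ℂ (star w ⬝ᵥ v) :=
  star_dotProduct v w

lemma trace_proj (v : Fin d → ℂ) : (proj v).trace = star v ⬝ᵥ v := by
  simp [proj, trace, diag, vecMulVec_apply, dotProduct, mul_comm]

lemma proj_posSemidef (v : Fin d → ℂ) : (proj v).PosSemidef := by
  rw [posSemidef_iff_dotProduct_mulVec]
  constructor
  · ext k l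
    simp [proj, vecMulVec_apply, conjTranspose_apply, mul_comm]
  · intro x
    rw [proj_mulVec, dotProduct_smul]
    have h : star v ⬝ᵥ x = starRingEnd ℂ (star x ⬝ᵥ v) := star_dot_conj v x
    rw [h, smul_eq_mul, mul_comm, Complex.mul_conj]
    exact_mod_cast Complex.normSq_nonneg _

lemma sum_proj_eq_one (a : Fin d → (Fin d → ℂ))
    (ha : ∀ i j, star (a i) ⬝ᵥ a j = if i = j then 1 else 0) :
    ∑ i, proj (a i) = 1 := by
  set A : Matrix (Fin d) (Fin d) ℂ := Matrix.of (fun i k => a i k) with hA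
  have h1 : A * Aᴴ = 1 := by
    ext i j
    have := ha i j
    simpa [hA, mul_apply, conjTranspose_apply, dotProduct, one_apply, eq_comm,
      mul_comm, Complex.conj_eq_iff_re] using congrArg (starRingEnd ℂ) this
  have h2 : Aᴴ * A = 1 := mul_eq_one_comm.mp h1
  ext k l
  have h3 := congrFun (congrFun h2 k) l
  simp only [mul_apply, conjTranspose_apply, hA, Matrix.of_apply, one_apply] at h3
  have h4 : ∑ i, proj (a i) k l = starRingEnd ℂ (∑ i, starRingEnd ℂ (a i k) * a i l) := by
    simp [proj, vecMulVec_apply, mul_comm]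
  simp only [Finset.sum_apply, Matrix.sum_apply] at h4 ⊢
  simp only [Complex.star_def] at h3
  rw [h4, h3]
  all_goals split <;> simp_all [Matrix.one_apply]

lemma probB_eq (b : Fin d → Fin d → ℂ) (ρ : Matrix (Fin d) (Fin d) ℂ) (j : Fin d) :
    probB (fun j => proj (b j)) ρ j = (star (b j) ⬝ᵥ ρ *ᵥ b j).re := by
  simp [probB, trace_proj_mul]

lemma term_eq (v w : Fin d → ℂ) (ρ : Matrix (Fin d) (Fin d) ℂ) :
    (star w ⬝ᵥ (proj v * ρ * proj v) *ᵥ w).re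
      = Complex.normSq (star v ⬝ᵥ w) * (star v ⬝ᵥ ρ *ᵥ v).re := by
  rw [← Matrix.mulVec_mulVec, ← Matrix.mulVec_mulVec, proj_mulVec, proj_mulVec,
    Matrix.mulVec_smul]
  simp only [dotProduct_smul, smul_eq_mul]
  rw [star_dot_conj v w]
  set z := star w ⬝ᵥ v with hz
  set c := star v ⬝ᵥ ρ *ᵥ v with hc
  have h2 : starRingEnd ℂ z * c * z = (Complex.normSq z : ℂ) * c := by
    rw [← Complex.mul_conj]; ring
  calc (starRingEnd ℂ z * c * z).re = ((Complex.normSq z : ℂ) * c).re := by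
        rw [h2]
    _ = Complex.normSq (starRingEnd ℂ z) * c.re := by
        rw [Complex.normSq_conj, Complex.re_ofReal_mul]

lemma probAB_eq (a b : Fin d → Fin d → ℂ) (ρ : Matrix (Fin d) (Fin d) ℂ) (j : Fin d) :
    probAB (fun i => proj (a i)) (fun j => proj (b j)) ρ j
      = ∑ i, Complex.normSq (star (a i) ⬝ᵥ b j) * (star (a i) ⬝ᵥ ρ *ᵥ a i).re := by
  simp only [probAB, measChannel, Finset.mul_sum, trace_sum, trace_proj_mul, Complex.re_sum]
  exact Finset.sum_congr rfl fun i _ => term_eq (a i) (b j) ρ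

lemma sum_form_eq_trace (a : Fin d → (Fin d → ℂ))
    (ha : ∀ i j, star (a i) ⬝ᵥ a j = if i = j then 1 else 0)
    (ρ : Matrix (Fin d) (Fin d) ℂ) :
    ∑ i, star (a i) ⬝ᵥ ρ *ᵥ a i = ρ.trace := by
  have h1 : ∑ i, proj (a i) = 1 := sum_proj_eq_one a ha
  calc ∑ i, star (a i) ⬝ᵥ ρ *ᵥ a i = ∑ i, (proj (a i) * ρ).trace := by
        exact Finset.sum_congr rfl fun i _ => (trace_proj_mul (a i) ρ).symm
    _ = ((∑ i, proj (a i)) * ρ).trace := by rw [Finset.sum_mul, trace_sum]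
    _ = ρ.trace := by rw [h1, one_mul]

lemma form_re_nonneg {ρ : Matrix (Fin d) (Fin d) ℂ} (hρ : ρ.PosSemidef) (x : Fin d → ℂ) :
    0 ≤ (star x ⬝ᵥ ρ *ᵥ x).re := by
  have := hρ.dotProduct_mulVec_nonneg x
  rw [Complex.le_def] at this
  exact this.1

lemma sqrt_sum_le (s : Finset (Fin d)) (p : Fin d → ℝ) (hp : ∀ j, 0 ≤ p j) :
    Real.sqrt (∑ j ∈ s, p j) ≤ ∑ j ∈ s, Real.sqrt (p j) := by
  have h1 : ∑ j ∈ s, p j = ∑ j ∈ s, (Real.sqrt (p j))^2 :=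
    Finset.sum_congr rfl fun j _ => (Real.sq_sqrt (hp j)).symm
  rw [h1]
  calc Real.sqrt (∑ j ∈ s, Real.sqrt (p j)^2) ≤ Real.sqrt ((∑ j ∈ s, Real.sqrt (p j))^2) :=
        Real.sqrt_le_sqrt (Finset.sum_sq_le_sq_sum_of_nonneg fun j _ => Real.sqrt_nonneg _)
    _ = ∑ j ∈ s, Real.sqrt (p j) :=
        Real.sqrt_sq (Finset.sum_nonneg fun j _ => Real.sqrt_nonneg _)

lemma card_filter_ge {dc : ℕ} (hdcd : dc < d) :
    (Finset.univ.filter (fun i : Fin d => dc ≤ (i:ℕ))).card = d - dc := by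
  have h1 : (Finset.univ.filter (fun i : Fin d => (i:ℕ) < dc)).card = dc := by
    have he : Finset.univ.filter (fun i : Fin d => (i:ℕ) < dc)
        = Finset.Iio (⟨dc, hdcd⟩ : Fin d) := by
      ext i; simp [Finset.mem_Iio, Fin.lt_def]
    rw [he, Fin.card_Iio]
  have h2 := Finset.card_filter_add_card_filter_not (s := (Finset.univ : Finset (Fin d)))
      (p := fun i : Fin d => (i:ℕ) < dc)
  simp only [not_lt, Finset.card_univ, Fintype.card_fin] at h2
  omega

lemma fid_lb {dc : ℕ} (lam : ℝ) (hlam0 : 0 < lam) (hlam1 : lam ≤ 1)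
    (p q r : Fin d → ℝ)
    (hp : ∀ j, 0 ≤ p j) (hr : ∀ i, 0 ≤ r i) (hq : ∀ j, 0 ≤ q j)
    (hps : ∑ j, p j = 1) (hrs : ∑ i, r i = 1)
    (hpr : ∀ j : Fin d, (j:ℕ) < dc → p j = r j)
    (hq1 : ∀ j : Fin d, (j:ℕ) < dc → q j = r j)
    (hq2 : ∀ j : Fin d, dc ≤ (j:ℕ) →
        q j = lam * ∑ i ∈ Finset.univ.filter (fun i : Fin d => dc ≤ (i:ℕ)), r i) :
    Real.sqrt lam ≤ ∑ j, Real.sqrt (q j * p j) := by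
  classical
  set Sc := Finset.univ.filter (fun i : Fin d => (i:ℕ) < dc) with hSc
  set S := Finset.univ.filter (fun i : Fin d => dc ≤ (i:ℕ)) with hS
  have hSeq : Finset.univ.filter (fun i : Fin d => ¬ (i:ℕ) < dc) = S := by
    simp [hS, not_lt]
  have hsplit : ∀ f : Fin d → ℝ, ∑ j, f j = ∑ j ∈ Sc, f j + ∑ j ∈ S, f j := by
    intro f
    rw [← Finset.sum_filter_add_sum_filter_not Finset.univ (fun i : Fin d => (i:ℕ) < dc) f, hSeq]
  set t := ∑ j ∈ Sc, r j with ht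
  set s := ∑ j ∈ S, r j with hs
  have hts : t + s = 1 := by rw [ht, hs, ← hsplit]; exact hrs
  have ht0 : 0 ≤ t := Finset.sum_nonneg fun j _ => hr j
  have hs0 : 0 ≤ s := Finset.sum_nonneg fun j _ => hr j
  have hSp : ∑ j ∈ S, p j = s := by
    have h1 : ∑ j ∈ Sc, p j = t := by
      rw [ht]; apply Finset.sum_congr rfl
      intro j hj; rw [hSc, Finset.mem_filter] at hj; exact hpr j hj.2
    have := hsplit p
    rw [hps, h1] at this
    linarith
  have hScval : ∑ j ∈ Sc, Real.sqrt (q j * p j) = t := by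
    rw [ht]; apply Finset.sum_congr rfl
    intro j hj; rw [hSc, Finset.mem_filter] at hj
    rw [hq1 j hj.2, hpr j hj.2, Real.sqrt_mul_self (hr j)]
  have hSval : ∑ j ∈ S, Real.sqrt (q j * p j)
      = Real.sqrt (lam * s) * ∑ j ∈ S, Real.sqrt (p j) := by
    rw [Finset.mul_sum]; apply Finset.sum_congr rfl
    intro j hj; rw [hS, Finset.mem_filter] at hj
    rw [hq2 j hj.2, Real.sqrt_mul (mul_nonneg hlam0.le hs0)]
  have hbig : Real.sqrt (lam * s) * Real.sqrt s ≤ ∑ j ∈ S, Real.sqrt (q j * p j) := by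
    rw [hSval]
    have h1 : Real.sqrt s = Real.sqrt (∑ j ∈ S, p j) := by rw [hSp]
    rw [h1]
    exact mul_le_mul_of_nonneg_left (sqrt_sum_le S p hp) (Real.sqrt_nonneg _)
  have hprod : Real.sqrt (lam * s) * Real.sqrt s = Real.sqrt lam * s := by
    rw [Real.sqrt_mul hlam0.le, mul_assoc, Real.mul_self_sqrt hs0]
  have hfin : Real.sqrt lam ≤ t + Real.sqrt lam * s := by
    have h1 : Real.sqrt lam ≤ 1 := by
      rw [show (1:ℝ) = Real.sqrt 1 by rw [Real.sqrt_one]]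
      exact Real.sqrt_le_sqrt hlam1
    nlinarith [Real.sqrt_nonneg lam]
  calc Real.sqrt lam ≤ t + Real.sqrt lam * s := hfin
    _ ≤ t + ∑ j ∈ S, Real.sqrt (q j * p j) := by rw [← hprod]; linarith [hbig]
    _ = ∑ j, Real.sqrt (q j * p j) := by rw [hsplit fun j => Real.sqrt (q j * p j), hScval]

lemma QF_key {d dc : ℕ} (hd : 0 < d) (hdc : dc ≤ d - 1)
    (a b : Fin d → (Fin d → ℂ))
    (ha : ∀ i j, star (a i) ⬝ᵥ a j = if i = j then 1 else 0)
    (hb : ∀ i j, star (b i) ⬝ᵥ b j = if i = j then 1 else 0)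
    (hcomm : ∀ i : Fin d, (i : ℕ) < dc → a i = b i)
    (horth : ∀ i j : Fin d,
      (((i : ℕ) < dc ∧ dc ≤ (j : ℕ)) ∨ (dc ≤ (i : ℕ) ∧ (j : ℕ) < dc)) →
        star (a i) ⬝ᵥ b j = 0)
    (hmub : ∀ i j : Fin d, dc ≤ (i : ℕ) → dc ≤ (j : ℕ) →
      Complex.normSq (star (a i) ⬝ᵥ b j) = 1 / ((d : ℝ) - (dc : ℝ))) :
    QF (fun i => proj (a i)) (fun j => proj (b j)) = 1 - 1 / ((d : ℝ) - (dc : ℝ)) := by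
  classical
  have hdcd : dc < d := by omega
  set lam : ℝ := 1 / ((d : ℝ) - (dc : ℝ)) with hlamdef
  have hden1 : 1 ≤ (d : ℝ) - (dc : ℝ) := by
    have : (dc : ℝ) + 1 ≤ (d : ℝ) := by exact_mod_cast hdcd
    linarith
  have hden0 : (0:ℝ) < (d : ℝ) - (dc : ℝ) := by linarith
  have hlam0 : 0 < lam := by rw [hlamdef]; positivity
  have hlam1 : lam ≤ 1 := by
    rw [hlamdef]
    rw [div_le_one hden0]; linarith
  -- upper bound part
  have hub : ∀ x ∈ {x : ℝ | ∃ ρ, IsDensity ρ ∧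
      x = 1 - (classFid (probAB (fun i => proj (a i)) (fun j => proj (b j)) ρ)
        (probB (fun j => proj (b j)) ρ)) ^ 2}, x ≤ 1 - lam := by
    rintro x ⟨ρ, hρ, rfl⟩
    set r : Fin d → ℝ := fun i => (star (a i) ⬝ᵥ ρ *ᵥ a i).re with hrdef
    set p : Fin d → ℝ := probB (fun j => proj (b j)) ρ with hpdef
    set q : Fin d → ℝ := probAB (fun i => proj (a i)) (fun j => proj (b j)) ρ with hqdef
    have hpe : ∀ j, p j = (star (b j) ⬝ᵥ ρ *ᵥ b j).re := fun j => probB_eq b ρ j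
    have hqe : ∀ j, q j = ∑ i, Complex.normSq (star (a i) ⬝ᵥ b j) * r i :=
      fun j => probAB_eq a b ρ j
    have hp : ∀ j, 0 ≤ p j := fun j => (hpe j) ▸ form_re_nonneg hρ.1 (b j)
    have hr : ∀ i, 0 ≤ r i := fun i => form_re_nonneg hρ.1 (a i)
    have hq : ∀ j, 0 ≤ q j := by
      intro j; rw [hqe j]
      exact Finset.sum_nonneg fun i _ =>
        mul_nonneg (Complex.normSq_nonneg _) (hr i)
    have hsum_eq_one : ∀ (c : Fin d → Fin d → ℂ)
        (hc : ∀ i j, star (c i) ⬝ᵥ c j = if i = j then 1 else 0),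
        ∑ i, (star (c i) ⬝ᵥ ρ *ᵥ c i).re = 1 := by
      intro c hc
      have := sum_form_eq_trace c hc ρ
      rw [hρ.2] at this
      have := congrArg Complex.re this
      simpa [Complex.re_sum] using this
    have hps : ∑ j, p j = 1 := by
      have := hsum_eq_one b hb
      rw [funext hpe]; exact this
    have hrs : ∑ i, r i = 1 := hsum_eq_one a ha
    have hpr : ∀ j : Fin d, (j:ℕ) < dc → p j = r j := by
      intro j hj; rw [hpe j, hrdef]; rw [← hcomm j hj]
    have hq1 : ∀ j : Fin d, (j:ℕ) < dc → q j = r j := by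
      intro j hj
      rw [hqe j]
      rw [Finset.sum_eq_single j]
      · rw [← hcomm j hj, ha j j, if_pos rfl]; simp
      · intro i _ hij
        rw [← hcomm j hj, ha i j, if_neg hij]; simp
      · intro h; exact absurd (Finset.mem_univ j) h
    have hq2 : ∀ j : Fin d, dc ≤ (j:ℕ) →
        q j = lam * ∑ i ∈ Finset.univ.filter (fun i : Fin d => dc ≤ (i:ℕ)), r i := by
      intro j hj
      rw [hqe j,
        ← Finset.sum_filter_add_sum_filter_not Finset.univ (fun i : Fin d => dc ≤ (i:ℕ))]
      have h1 : ∑ i ∈ Finset.univ.filter (fun i : Fin d => ¬ dc ≤ (i:ℕ)),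
          Complex.normSq (star (a i) ⬝ᵥ b j) * r i = 0 := by
        apply Finset.sum_eq_zero
        intro i hi
        rw [Finset.mem_filter, not_le] at hi
        rw [horth i j (Or.inl ⟨hi.2, hj⟩)]
        simp
      have h2 : ∑ i ∈ Finset.univ.filter (fun i : Fin d => dc ≤ (i:ℕ)),
          Complex.normSq (star (a i) ⬝ᵥ b j) * r i
          = lam * ∑ i ∈ Finset.univ.filter (fun i : Fin d => dc ≤ (i:ℕ)), r i := by
        rw [Finset.mul_sum]
        apply Finset.sum_congr rfl
        intro i hi
        rw [Finset.mem_filter] at hi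
        rw [hmub i j hi.2 hj, hlamdef]
      rw [h1, h2, add_zero]
    have hF : Real.sqrt lam ≤ classFid q p :=
      fid_lb lam hlam0 hlam1 p q r hp hr hq hps hrs hpr hq1 hq2
    have hF2 : lam ≤ (classFid q p) ^ 2 := by
      have := pow_le_pow_left₀ (Real.sqrt_nonneg lam) hF 2
      rwa [Real.sq_sqrt hlam0.le] at this
    linarith
  -- witness
  set j0 : Fin d := ⟨dc, hdcd⟩ with hj0
  have hj0le : dc ≤ (j0 : ℕ) := le_refl dc
  set ρ0 := proj (b j0) with hρ0
  have hdens : IsDensity ρ0 := by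
    refine ⟨proj_posSemidef (b j0), ?_⟩
    rw [hρ0, trace_proj, hb j0 j0, if_pos rfl]
  have hpe : ∀ j, probB (fun j => proj (b j)) ρ0 j = if j = j0 then 1 else 0 := by
    intro j
    rw [probB_eq, hρ0, proj_mulVec, dotProduct_smul, smul_eq_mul, hb j0 j, hb j j0]
    by_cases h : j = j0
    · subst h; simp
    · rw [if_neg h, if_neg (fun hh => h hh.symm)]; simp [h]
  have hre : ∀ i, (star (a i) ⬝ᵥ ρ0 *ᵥ a i).re = Complex.normSq (star (a i) ⬝ᵥ b j0) := by
    intro i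
    rw [hρ0, proj_mulVec, dotProduct_smul, smul_eq_mul, star_dot_conj (b j0) (a i),
      mul_comm, Complex.mul_conj]
    exact_mod_cast rfl
  have hqj0 : probAB (fun i => proj (a i)) (fun j => proj (b j)) ρ0 j0 = lam := by
    rw [probAB_eq]
    have hterm : ∀ i : Fin d, Complex.normSq (star (a i) ⬝ᵥ b j0) * (star (a i) ⬝ᵥ ρ0 *ᵥ a i).re
        = Complex.normSq (star (a i) ⬝ᵥ b j0) * Complex.normSq (star (a i) ⬝ᵥ b j0) := by
      intro i; rw [hre i]
    rw [Finset.sum_congr rfl fun i _ => hterm i,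
      ← Finset.sum_filter_add_sum_filter_not Finset.univ (fun i : Fin d => dc ≤ (i:ℕ))]
    have h1 : ∑ i ∈ Finset.univ.filter (fun i : Fin d => ¬ dc ≤ (i:ℕ)),
        Complex.normSq (star (a i) ⬝ᵥ b j0) * Complex.normSq (star (a i) ⬝ᵥ b j0) = 0 := by
      apply Finset.sum_eq_zero
      intro i hi
      rw [Finset.mem_filter, not_le] at hi
      rw [horth i j0 (Or.inl ⟨hi.2, hj0le⟩)]
      simp
    have h2 : ∑ i ∈ Finset.univ.filter (fun i : Fin d => dc ≤ (i:ℕ)),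
        Complex.normSq (star (a i) ⬝ᵥ b j0) * Complex.normSq (star (a i) ⬝ᵥ b j0)
        = ((d : ℝ) - (dc : ℝ)) * (lam * lam) := by
      have hcongr : ∑ i ∈ Finset.univ.filter (fun i : Fin d => dc ≤ (i:ℕ)),
          Complex.normSq (star (a i) ⬝ᵥ b j0) * Complex.normSq (star (a i) ⬝ᵥ b j0)
          = ∑ _i ∈ Finset.univ.filter (fun i : Fin d => dc ≤ (i:ℕ)), lam * lam :=
        Finset.sum_congr rfl fun i hi => by
          rw [Finset.mem_filter] at hi
          rw [hmub i j0 hi.2 hj0le]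
      rw [hcongr, Finset.sum_const, card_filter_ge hdcd, nsmul_eq_mul]
      congr 1
      rw [Nat.cast_sub hdcd.le]
    rw [h1, h2, add_zero, hlamdef]
    field_simp
  have hFval : classFid (probAB (fun i => proj (a i)) (fun j => proj (b j)) ρ0)
      (probB (fun j => proj (b j)) ρ0) = Real.sqrt lam := by
    unfold classFid
    rw [Finset.sum_eq_single j0]
    · rw [hpe j0, if_pos rfl, mul_one, hqj0]
    · intro j _ hj
      rw [hpe j, if_neg hj, mul_zero, Real.sqrt_zero]
    · intro h; exact absurd (Finset.mem_univ j0) h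
  have hmem : (1 - lam) ∈ {x : ℝ | ∃ ρ, IsDensity ρ ∧
      x = 1 - (classFid (probAB (fun i => proj (a i)) (fun j => proj (b j)) ρ)
        (probB (fun j => proj (b j)) ρ)) ^ 2} := by
    exact ⟨ρ0, hdens, by rw [hFval, Real.sq_sqrt hlam0.le]⟩
  unfold QF
  apply le_antisymm
  · exact csSup_le ⟨1 - lam, hmem⟩ hub
  · exact le_csSup ⟨1 - lam, hub⟩ hmem

end Stmt14Aux

theorem stmt_14 {d dc : ℕ} (hd : 0 < d) (hdc : dc ≤ d - 1)
    (a b : Fin d → (Fin d → ℂ))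
    (ha : ∀ i j, star (a i) ⬝ᵥ a j = if i = j then 1 else 0)
    (hb : ∀ i j, star (b i) ⬝ᵥ b j = if i = j then 1 else 0)
    (hcomm : ∀ i : Fin d, (i : ℕ) < dc → a i = b i)
    (horth : ∀ i j : Fin d,
      (((i : ℕ) < dc ∧ dc ≤ (j : ℕ)) ∨ (dc ≤ (i : ℕ) ∧ (j : ℕ) < dc)) →
        star (a i) ⬝ᵥ b j = 0)
    (hmub : ∀ i j : Fin d, dc ≤ (i : ℕ) → dc ≤ (j : ℕ) →
      Complex.normSq (star (a i) ⬝ᵥ b j) = 1 / ((d : ℝ) - (dc : ℝ))) :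
    QF (fun i => proj (a i)) (fun j => proj (b j)) = 1 - 1 / ((d : ℝ) - (dc : ℝ)) ∧
      QF (fun j => proj (b j)) (fun i => proj (a i)) = 1 - 1 / ((d : ℝ) - (dc : ℝ)) ∧
      (QF (fun i => proj (a i)) (fun j => proj (b j)) +
            QF (fun j => proj (b j)) (fun i => proj (a i))) / 4
        = (1 / 2) * (1 - 1 / ((d : ℝ) - (dc : ℝ))) := by
  have h1 := Stmt14Aux.QF_key hd hdc a b ha hb hcomm horth hmub
  have hcomm' : ∀ i : Fin d, (i : ℕ) < dc → b i = a i := fun i hi => (hcomm i hi).symm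
  have horth' : ∀ i j : Fin d,
      (((i : ℕ) < dc ∧ dc ≤ (j : ℕ)) ∨ (dc ≤ (i : ℕ) ∧ (j : ℕ) < dc)) →
        star (b i) ⬝ᵥ a j = 0 := by
    intro i j hor
    rw [Stmt14Aux.star_dot_conj]
    rcases hor with h | h
    · rw [horth j i (Or.inr ⟨h.2, h.1⟩), map_zero]
    · rw [horth j i (Or.inl ⟨h.2, h.1⟩), map_zero]
  have hmub' : ∀ i j : Fin d, dc ≤ (i : ℕ) → dc ≤ (j : ℕ) →
      Complex.normSq (star (b i) ⬝ᵥ a j) = 1 / ((d : ℝ) - (dc : ℝ)) := by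
    intro i j hi hj
    rw [Stmt14Aux.star_dot_conj, Complex.normSq_conj, hmub j i hj hi]
  have h2 := Stmt14Aux.QF_key hd hdc b a hb ha hcomm' horth' hmub'
  refine ⟨h1, h2, ?_⟩
  rw [h1, h2]; ring

end
end
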